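/- (Canonicalization) For every x : ZFSet there exists a well-founded basic code X with Decode(X) = x which is *canonical*: for all η, ν ∈ X, if decode_X(η) = decode_X(ν), then the subtrees of X at η and at ν are literally identical, i.e. for every list s of ordinals, η ++ s ∈ X if and only if ν ++ s ∈ X. -/

import Mathlib

universe u

/-- A *basic code*: a nonempty set of finite lists of ordinals that is closed under
prefixes and has no gaps. -/
def IsBasicCode (X : Set (List Ordinal.{u})) : Prop :=
  X.Nonempty ∧
  (∀ s ∈ X, ∀ t : List Ordinal.{u}, t <+: s → t ∈ X) ∧
  (∀ s : List Ordinal.{u}, ∀ α₁ α₂ : Ordinal.{u}, α₁ < α₂ → s ++ [α₂] ∈ X → s ++ [α₁] ∈ X)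

/-- The proper-extension relation on `X`: `ν` is below `η` iff `η` is a proper prefix of `ν`. -/
def Below (X : Set (List Ordinal.{u})) (ν η : {s : List Ordinal.{u} // s ∈ X}) : Prop :=
  (η : List Ordinal.{u}) <+: (ν : List Ordinal.{u}) ∧ (η : List Ordinal.{u}) ≠ (ν : List Ordinal.{u})

/-- A basic code is *well-founded* if the proper-extension relation is well-founded on it. -/
def IsWFCode (X : Set (List Ordinal.{u})) : Prop :=
  IsBasicCode X ∧ WellFounded (Below X)

/-- `f` satisfies the defining recurrence of the decode function of the code `X`:
the members of `f s` are exactly the sets `f (s ++ [α])` for those `α` with `s ++ [α] ∈ X`. -/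
def IsDecodeFun (X : Set (List Ordinal.{u})) (f : List Ordinal.{u} → ZFSet.{u}) : Prop :=
  ∀ s ∈ X, ∀ y : ZFSet.{u},
    y ∈ f s ↔ ∃ α : Ordinal.{u}, s ++ [α] ∈ X ∧ y = f (s ++ [α])

/-- Every ZFSet admits a canonical ordinal enumeration of its members. -/
lemma ZFSet.exists_enum (y : ZFSet.{u}) :
    ∃ (o : Ordinal.{u}) (e : Ordinal.{u} → ZFSet.{u}),
      ∀ z, z ∈ y ↔ ∃ α, α < o ∧ e α = z := by
  haveI : Small.{u} y.toSet := ZFSet.small_coe y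
  let β := Shrink.{u} y.toSet
  let r : β → β → Prop := WellOrderingRel
  refine ⟨Ordinal.type r,
    fun α => if h : α < Ordinal.type r then
      (((equivShrink y.toSet).symm (Ordinal.enum r ⟨α, h⟩) : y.toSet) : ZFSet.{u}) else ∅,
    fun z => ?_⟩
  constructor
  · intro hz
    refine ⟨Ordinal.typein r (equivShrink y.toSet ⟨z, hz⟩),
      Ordinal.typein_lt_type r _, ?_⟩
    simp [Ordinal.typein_lt_type r]
  · rintro ⟨α, hα, rfl⟩
    dsimp only
    rw [dif_pos hα]
    exact (((equivShrink y.toSet).symm (Ordinal.enum r ⟨α, hα⟩)).2)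

/-- A global choice of enumerations. -/
noncomputable def zEnum : ZFSet.{u} → Ordinal.{u} × (Ordinal.{u} → ZFSet.{u}) :=
  fun y => ⟨(ZFSet.exists_enum y).choose, (ZFSet.exists_enum y).choose_spec.choose⟩

lemma zEnum_spec (y : ZFSet.{u}) :
    ∀ z, z ∈ y ↔ ∃ α, α < (zEnum y).1 ∧ (zEnum y).2 α = z :=
  (ZFSet.exists_enum y).choose_spec.choose_spec

/-- Follow a list of ordinal indices down the canonical enumeration tree. -/
noncomputable def zChain : ZFSet.{u} → List Ordinal.{u} → Option ZFSet.{u}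
  | y, [] => some y
  | y, α :: t => if α < (zEnum y).1 then zChain ((zEnum y).2 α) t else none

lemma zChain_append (y : ZFSet.{u}) (s t : List Ordinal.{u}) :
    zChain y (s ++ t) = (zChain y s).bind (fun z => zChain z t) := by
  induction s generalizing y with
  | nil => simp [zChain]
  | cons α s ih =>
    simp only [List.cons_append, zChain]
    split
    · exact ih _
    · rfl

/-- Canonicalization: every `ZFSet` is encoded by a *canonical* well-founded basic code,
one in which any two nodes decoding to the same set carry literally identical subtrees. -/
theorem exists_canonical_wfCode (x : ZFSet.{u}) :
    ∃ X : Set (List Ordinal.{u}), IsWFCode X ∧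
      ∃ f : List Ordinal.{u} → ZFSet.{u}, IsDecodeFun X f ∧ f [] = x ∧
        ∀ η ∈ X, ∀ ν ∈ X, f η = f ν →
          ∀ s : List Ordinal.{u}, η ++ s ∈ X ↔ ν ++ s ∈ X := by
  set X : Set (List Ordinal.{u}) := { s | (zChain x s).isSome } with hX
  set f : List Ordinal.{u} → ZFSet.{u} := fun s => (zChain x s).getD ∅ with hf
  have memX : ∀ s : List Ordinal.{u}, s ∈ X ↔ ∃ y, zChain x s = some y := by
    intro s
    simp only [hX, Set.mem_setOf_eq, Option.isSome_iff_exists]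
  have hfval : ∀ s y, zChain x s = some y → f s = y := by
    intro s y h; simp [hf, h]
  -- single step
  have step : ∀ (y : ZFSet.{u}) (α : Ordinal.{u}),
      zChain y [α] = if α < (zEnum y).1 then some ((zEnum y).2 α) else none := by
    intro y α
    by_cases h : α < (zEnum y).1 <;> simp [zChain, h]
  have prefix_closed : ∀ s ∈ X, ∀ t : List Ordinal.{u}, t <+: s → t ∈ X := by
    intro s hs t ht
    obtain ⟨u, rfl⟩ := ht
    obtain ⟨y, hy⟩ := (memX _).1 hs
    rw [zChain_append] at hy
    rcases h : zChain x t with _ | z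
    · rw [h, Option.bind_none] at hy; exact absurd hy (by simp)
    · exact (memX t).2 ⟨z, h⟩
  refine ⟨X, ⟨⟨⟨[], (memX []).2 ⟨x, rfl⟩⟩, prefix_closed, ?_⟩, ?_⟩, f, ?_, ?_, ?_⟩
  · -- no gaps
    intro s α₁ α₂ h12 h2
    obtain ⟨y2, hy2⟩ := (memX _).1 h2
    rw [zChain_append] at hy2
    rcases h : zChain x s with _ | z
    · rw [h, Option.bind_none] at hy2; exact absurd hy2 (by simp)
    · rw [h] at hy2
      simp only [Option.bind_some, step] at hy2
      split at hy2
      · next hlt =>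
        refine (memX _).2 ⟨(zEnum z).2 α₁, ?_⟩
        rw [zChain_append, h]
        simp [step, h12.trans hlt]
      · simp at hy2
  · -- well-founded
    constructor
    rintro ⟨η, hη⟩
    obtain ⟨y, hy⟩ := (memX _).1 hη
    induction y using ZFSet.inductionOn generalizing η hη with
    | _ y IH =>
      constructor
      rintro ⟨ν, hν⟩ ⟨⟨l, rfl⟩, hne⟩
      rcases l with _ | ⟨α, t⟩
      · simp at hne
      · -- η ++ α :: t ; first, η ++ [α] ∈ X
        obtain ⟨w, hw⟩ := (memX _).1 hν
        have hsplit : zChain x (η ++ α :: t) = (zChain x (η ++ [α])).bind (fun z => zChain z t) := by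
          rw [show η ++ α :: t = (η ++ [α]) ++ t by simp, zChain_append]
        have h1 : zChain x (η ++ [α]) = if α < (zEnum y).1 then some ((zEnum y).2 α) else none := by
          rw [zChain_append, hy, Option.bind_some, step]
        have hlt : α < (zEnum y).1 := by
          by_contra hcon
          rw [hsplit, h1, if_neg hcon] at hw
          simp at hw
        rw [if_pos hlt] at h1
        have hmem : (zEnum y).2 α ∈ y := (zEnum_spec y _).2 ⟨α, hlt, rfl⟩
        have hacc : Acc (Below X) ⟨η ++ [α], (memX _).2 ⟨_, h1⟩⟩ := IH _ hmem _ _ h1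
        rcases t with _ | ⟨β, t⟩
        · exact hacc
        · exact hacc.inv ⟨⟨β :: t, by simp⟩, by simp⟩
  · -- IsDecodeFun
    intro s hs z
    obtain ⟨y, hy⟩ := (memX _).1 hs
    rw [hfval s y hy, zEnum_spec y z]
    constructor
    · rintro ⟨α, hα, rfl⟩
      have h1 : zChain x (s ++ [α]) = some ((zEnum y).2 α) := by
        rw [zChain_append, hy, Option.bind_some, step, if_pos hα]
      exact ⟨α, (memX _).2 ⟨_, h1⟩, (hfval _ _ h1).symm⟩
    · rintro ⟨α, hα, rfl⟩
      obtain ⟨w, hw⟩ := (memX _).1 hα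
      have h1 : zChain x (s ++ [α]) = if α < (zEnum y).1 then some ((zEnum y).2 α) else none := by
        rw [zChain_append, hy, Option.bind_some, step]
      have hlt : α < (zEnum y).1 := by
        by_contra hcon
        rw [h1, if_neg hcon] at hw; simp at hw
      rw [if_pos hlt] at h1
      exact ⟨α, hlt, (hfval _ _ h1).symm⟩
  · simp [hf, zChain]
  · -- canonicity
    intro η hη ν hν hfeq s
    obtain ⟨y1, hy1⟩ := (memX _).1 hη
    obtain ⟨y2, hy2⟩ := (memX _).1 hν
    have : y1 = y2 := by rw [← hfval _ _ hy1, ← hfval _ _ hy2, hfeq]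
    subst this
    rw [memX, memX, zChain_append, zChain_append, hy1, hy2]
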